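/- arXiv:2309.03490 — 2 statements merged into one kernel-verified Lean document; each statement's English description precedes it below -/
import Mathlib

section
/- Let p be a probability density on ℝ^d with finite third moment, i.e. ∫_{ℝ^d} |y|³ p(y) dy < ∞. For t ∈ (0,1) define q_t(x) := ∫_{ℝ^d} (2π(1-t²))^{-d/2} exp(-|x-ty|²/(2(1-t²))) p(y) dy and S(t,x) := ∇_x log q_t(x). Then for every x ∈ ℝ^d, lim_{t→0⁺} (x + S(t,x))/t = ∫_{ℝ^d} y p(y) dy, the mean of p. -/
open MeasureTheory Real Filter Set Matrix
open scoped ENNReal Pointwise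

noncomputable section

/-- `ℝ^d` as a Euclidean space. -/
abbrev Ed (d : ℕ) := EuclideanSpace ℝ (Fin d)

/-- Density of the standard Gaussian measure `γ_d` on `ℝ^d`. -/
def stdGaussDensity (d : ℕ) (x : Ed d) : ℝ :=
  (2 * π) ^ (-(d : ℝ) / 2) * Real.exp (-‖x‖ ^ 2 / 2)

/-- The standard Gaussian measure `γ_d` on `ℝ^d`. -/
def stdGaussian (d : ℕ) : Measure (Ed d) :=
  volume.withDensity fun x => ENNReal.ofReal (stdGaussDensity d x)

/-- Density of the Gaussian `N(m, s2 • I_d)` on `ℝ^d`. -/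
def gaussDensity {d : ℕ} (m : Ed d) (s2 : ℝ) (x : Ed d) : ℝ :=
  (2 * π * s2) ^ (-(d : ℝ) / 2) * Real.exp (-‖x - m‖ ^ 2 / (2 * s2))

/-- Relative density `r = p / φ` of a density `p` with respect to the standard Gaussian. -/
def relDensity {d : ℕ} (p : Ed d → ℝ) (x : Ed d) : ℝ := p x / stdGaussDensity d x

/-- The operator `𝒬_{1-t} r (x) = ∫ r (t x + √(1-t²) z) dγ_d(z)`. -/
def Qop {d : ℕ} (p : Ed d → ℝ) (t : ℝ) (x : Ed d) : ℝ :=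
  ∫ z, relDensity p (t • x + Real.sqrt (1 - t ^ 2) • z) ∂(stdGaussian d)

/-- The Föllmer velocity field `V(t,x) = (1/t) ∇ log 𝒬_{1-t} r (x)` for `t ∈ (0,1]`. -/
def follmerV {d : ℕ} (p : Ed d → ℝ) (t : ℝ) (x : Ed d) : Ed d :=
  (1 / t) • gradient (fun y => Real.log (Qop p t y)) x

/-- The Jacobian matrix `∇_x V(t,x)` of the Föllmer velocity field. -/
def jacobianV {d : ℕ} (p : Ed d → ℝ) (t : ℝ) (x : Ed d) : Matrix (Fin d) (Fin d) ℝ :=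
  Matrix.of fun i j => fderiv ℝ (fun y => follmerV p t y i) x (EuclideanSpace.single j 1)

/-- Mean (barycenter) of a measure on `ℝ^d`. -/
def meanVec {d : ℕ} (μ : Measure (Ed d)) : Ed d := ∫ x, x ∂μ

/-- Covariance matrix of a measure on `ℝ^d`. -/
def covMatrix {d : ℕ} (μ : Measure (Ed d)) : Matrix (Fin d) (Fin d) ℝ :=
  Matrix.of fun i j => ∫ x, (x i - meanVec μ i) * (x j - meanVec μ j) ∂μ

/-- The measure `p^{tx, 1-t²}` with density `y ↦ φ^{tx,1-t²}(y) r(y) / 𝒬_{1-t} r(x)`. -/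
def pCond {d : ℕ} (p : Ed d → ℝ) (t : ℝ) (x : Ed d) : Measure (Ed d) :=
  volume.withDensity fun y =>
    ENNReal.ofReal (gaussDensity (t • x) (1 - t ^ 2) y * relDensity p y / Qop p t x)

/-- `ν(dx) = p(x) dx` is `κ`-semi-log-concave: convex support and `∇²U ⪰ κ I` there. -/
def IsSemiLogConcave {d : ℕ} (p : Ed d → ℝ) (κ : ℝ) : Prop :=
  Convex ℝ (Function.support p) ∧
  ∃ U : Ed d → ℝ, ContDiff ℝ 2 U ∧ (∀ x ∈ Function.support p, p x = Real.exp (-U x)) ∧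
    ∀ x ∈ Function.support p, ∀ v : Ed d, κ * ‖v‖ ^ 2 ≤ iteratedFDeriv ℝ 2 U x ![v, v]

/-- `ν(dx) = p(x) dx` is `β`-semi-log-convex: convex support and `∇²U ⪯ β I` there. -/
def IsSemiLogConvex {d : ℕ} (p : Ed d → ℝ) (β : ℝ) : Prop :=
  Convex ℝ (Function.support p) ∧
  ∃ U : Ed d → ℝ, ContDiff ℝ 2 U ∧ (∀ x ∈ Function.support p, p x = Real.exp (-U x)) ∧
    ∀ x ∈ Function.support p, ∀ v : Ed d, iteratedFDeriv ℝ 2 U x ![v, v] ≤ β * ‖v‖ ^ 2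

/-- `D := (1/√2) · diam (supp ν)` (equal to `0` when the support is unbounded). -/
def Dconst {d : ℕ} (p : Ed d → ℝ) : ℝ :=
  (1 / Real.sqrt 2) * (EMetric.diam (Function.support p)).toReal

/-- The Föllmer velocity field extended to `t = 0` by `V(0,x) := E_ν[X]`. -/
def follmerVfull {d : ℕ} (p : Ed d → ℝ) (t : ℝ) (x : Ed d) : Ed d :=
  if t = 0 then ∫ y, p y • y else follmerV p t x

/-- `X : [0,1] × ℝ^d → ℝ^d` is a Föllmer flow map for `ν(dx) = p(x)dx`: it is `C¹` in both
variables, `X_0 = id` and `∂_t X_t(x) = V(t, X_t(x))` on `[0,1]`. -/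
def IsFollmerFlowMap {d : ℕ} (p : Ed d → ℝ) (X : ℝ → Ed d → Ed d) : Prop :=
  ContDiff ℝ 1 (fun q : ℝ × Ed d => X q.1 q.2) ∧ (∀ x, X 0 x = x) ∧
  ∀ x : Ed d, ∀ t ∈ Set.Icc (0 : ℝ) 1, HasDerivAt (fun s => X s x) (follmerVfull p t (X t x)) t

/-- The piecewise bound `θ_t` used for `κ D² < 1` (and `κ < 0`). -/
def thetaFn (κ D s : ℝ) : ℝ :=
  if s ≤ Real.sqrt ((1 - κ * D ^ 2) / ((1 - κ) * D ^ 2 + 1)) then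
    s * (s ^ 2 + D ^ 2 - 1) / (1 - s ^ 2) ^ 2
  else s * (1 - κ) / (s ^ 2 * (1 - κ) + κ)

/-- The standard Gaussian cumulative distribution function `Φ` on `ℝ`. -/
def gaussCDF (x : ℝ) : ℝ := ∫ y in Set.Iio x, Real.exp (-y ^ 2 / 2) / Real.sqrt (2 * π)

/-- Density of the Gaussian `N(a, S)` on `ℝ^d` with covariance matrix `S`. -/
def gaussDensityMat {d : ℕ} (a : Ed d) (S : Matrix (Fin d) (Fin d) ℝ) (x : Ed d) : ℝ :=
  ((2 * π) ^ (d : ℕ) * S.det) ^ (-(1 : ℝ) / 2) *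
    Real.exp (-(∑ i, ∑ j, (x i - a i) * S⁻¹ i j * (x j - a j)) / 2)

/-- Squared Wasserstein-2 distance, as an infimum over couplings (valued in `ℝ≥0∞`). -/
def W2sq {d : ℕ} (μ ν : Measure (Ed d)) : ℝ≥0∞ :=
  ⨅ (pl : Measure (Ed d × Ed d)) (_ : pl.map Prod.fst = μ ∧ pl.map Prod.snd = ν),
    ∫⁻ z, ENNReal.ofReal (‖z.1 - z.2‖ ^ 2) ∂pl

/-- The heat-type density `q_t(x) = ∫ (2π(1-t²))^{-d/2} exp(-|x-ty|²/(2(1-t²))) p(y) dy`. -/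
def qDens {d : ℕ} (p : Ed d → ℝ) (t : ℝ) (x : Ed d) : ℝ :=
  ∫ y, (2 * π * (1 - t ^ 2)) ^ (-(d : ℝ) / 2) *
    Real.exp (-‖x - t • y‖ ^ 2 / (2 * (1 - t ^ 2))) * p y

section AuxST0

open InnerProductSpace
open scoped RealInnerProductSpace

lemma aux_exp_bound (r b : ℝ) (hr : 0 ≤ r) (hb : 0 < b) :
    r * Real.exp (-r ^ 2 / b) ≤ Real.sqrt b := by
  rcases le_or_gt r (Real.sqrt b) with h | h
  · have h1 : Real.exp (-r ^ 2 / b) ≤ 1 := by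
      apply Real.exp_le_one_iff.mpr
      have h0 : (0:ℝ) ≤ r ^ 2 / b := div_nonneg (sq_nonneg r) hb.le
      rw [neg_div]; linarith
    nlinarith [Real.exp_pos (-r ^ 2 / b)]
  · have hr0 : 0 < r := lt_of_le_of_lt (Real.sqrt_nonneg b) h
    have hx : 0 < r ^ 2 / b := div_pos (by positivity) hb
    have hxe : r ^ 2 / b ≤ Real.exp (r ^ 2 / b) := by
      linarith [Real.add_one_le_exp (r ^ 2 / b)]
    have hexp : Real.exp (-r ^ 2 / b) ≤ b / r ^ 2 := by
      rw [neg_div, Real.exp_neg]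
      calc (Real.exp (r^2/b))⁻¹ ≤ (r^2/b)⁻¹ := inv_anti₀ hx hxe
        _ = b / r ^ 2 := by rw [inv_div]
    calc r * Real.exp (-r ^ 2 / b) ≤ r * (b / r ^ 2) := by nlinarith
      _ = b / r := by field_simp
      _ ≤ b / Real.sqrt b :=
          div_le_div_of_nonneg_left hb.le (Real.sqrt_pos.mpr hb) h.le
      _ = Real.sqrt b := Real.div_sqrt

lemma aux_hasFDerivAt {d : ℕ} (s : ℝ) (hs : 0 < s) (a z : Ed d) (c py : ℝ) :
    HasFDerivAt (fun w : Ed d => c * Real.exp (-‖w - a‖ ^ 2 / (2 * s)) * py)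
      ((c * Real.exp (-‖z - a‖ ^ 2 / (2 * s)) * py * (-s⁻¹)) •
        (InnerProductSpace.toDual ℝ (Ed d) (z - a) : Ed d →L[ℝ] ℝ)) z := by
  have h1 : HasFDerivAt (fun w : Ed d => w - a) (ContinuousLinearMap.id ℝ (Ed d)) z :=
    (hasFDerivAt_id z).sub_const a
  have h2 := h1.inner ℝ h1
  set u₀ : ℝ := ⟪z - a, z - a⟫_ℝ with hu₀
  have h3 : HasDerivAt (fun u : ℝ => c * Real.exp (-u / (2 * s)) * py)
      (c * Real.exp (-u₀ / (2 * s)) * (-(2 * s)⁻¹) * py) u₀ := by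
    have hlin : HasDerivAt (fun u : ℝ => -u / (2 * s)) (-(2 * s)⁻¹) u₀ := by
      simpa [neg_div, div_eq_mul_inv] using ((hasDerivAt_id u₀).neg.div_const (2 * s))
    have := (hlin.exp.const_mul c).mul_const py
    rw [show c * Real.exp (-u₀ / (2 * s)) * (-(2 * s)⁻¹) * py
        = c * (Real.exp (-u₀ / (2 * s)) * -(2 * s)⁻¹) * py by ring]
    exact this
  have h4 := h3.comp_hasFDerivAt z h2
  have hfun : (fun w : Ed d => c * Real.exp (-‖w - a‖ ^ 2 / (2 * s)) * py) =
      (fun u : ℝ => c * Real.exp (-u / (2 * s)) * py) ∘ fun w : Ed d => ⟪w - a, w - a⟫_ℝ := by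
    funext w
    simp only [Function.comp_apply]
    rw [real_inner_self_eq_norm_sq]
  have heq : ((c * Real.exp (-u₀ / (2 * s)) * (-(2 * s)⁻¹) * py) •
      ((fderivInnerCLM ℝ (z - a, z - a)).comp
        ((ContinuousLinearMap.id ℝ (Ed d)).prod (ContinuousLinearMap.id ℝ (Ed d))))) =
      ((c * Real.exp (-‖z - a‖ ^ 2 / (2 * s)) * py * (-s⁻¹)) •
        (InnerProductSpace.toDual ℝ (Ed d) (z - a) : Ed d →L[ℝ] ℝ)) := by
    ext v
    simp only [ContinuousLinearMap.smul_apply, InnerProductSpace.toDual_apply_apply,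
      ContinuousLinearMap.comp_apply, ContinuousLinearMap.prod_apply,
      ContinuousLinearMap.id_apply, fderivInnerCLM_apply, smul_eq_mul]
    rw [hu₀, real_inner_self_eq_norm_sq, real_inner_comm (v : Ed d) (z - a)]
    field_simp
    ring
  rw [hfun, ← heq]
  exact h4

/-- the integrand of `qDens` -/
def auxA (d : ℕ) (p : Ed d → ℝ) (t : ℝ) (z y : Ed d) : ℝ :=
  (2 * π * (1 - t ^ 2)) ^ (-(d : ℝ) / 2) *
    Real.exp (-‖z - t • y‖ ^ 2 / (2 * (1 - t ^ 2))) * p y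

lemma qDens_eq {d : ℕ} (p : Ed d → ℝ) (t : ℝ) (z : Ed d) :
    qDens p t z = ∫ y, auxA d p t z y := rfl

end AuxST0

set_option maxHeartbeats 1000000 in
set_option synthInstance.maxHeartbeats 1000000 in
/-- for a probability density `p` with finite third moment,
`(x + S(t,x))/t → ∫ y p(y) dy` as `t → 0⁺`, where `S(t,x) = ∇ log q_t(x)`. -/
theorem statement0 (d : ℕ) (p : Ed d → ℝ) (hpm : Measurable p) (hp0 : ∀ y, 0 ≤ p y)
    (hp1 : ∫ y, p y = 1) (hp3 : Integrable fun y => ‖y‖ ^ 3 * p y) (x : Ed d) :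
    Tendsto
      (fun t : ℝ => (1 / t) • (x + gradient (fun z => Real.log (qDens p t z)) x))
      (nhdsWithin 0 (Set.Ioi 0)) (nhds (∫ y, p y • y)) := by
  open InnerProductSpace in
  have hπ : (0:ℝ) < π := Real.pi_pos
  have hIp : Integrable p := integrable_of_integral_eq_one hp1
  have hInp : Integrable (fun y : Ed d => ‖y‖ * p y) := by
    refine (hIp.add hp3).mono' ((measurable_norm.mul hpm).aestronglyMeasurable) ?_
    filter_upwards with y
    have h0 := hp0 y
    have h1 : ‖y‖ ≤ 1 + ‖y‖ ^ 3 := by nlinarith [norm_nonneg y, sq_nonneg (‖y‖ - 1), sq_nonneg (‖y‖ + 1)]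
    rw [Real.norm_eq_abs, abs_of_nonneg (mul_nonneg (norm_nonneg y) h0)]
    simp only [Pi.add_apply]
    nlinarith
  set m : Ed d := ∫ y, p y • y with hm
  -- the key algebraic identity for t ∈ (0, 1/2)
  have key : ∀ t ∈ Ioo (0:ℝ) (1/2),
      (1/t) • (x + gradient (fun z => Real.log (qDens p t z)) x)
        = (-(t/(1-t^2))) • x + ((1-t^2) * qDens p t x)⁻¹ • (∫ y, auxA d p t x y • y) := by
    rintro t ⟨ht0, ht2⟩
    have hs : 0 < 1 - t ^ 2 := by nlinarith
    set s : ℝ := 1 - t ^ 2 with hsdef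
    set c : ℝ := (2 * π * s) ^ (-(d : ℝ) / 2) with hc
    have hc_pos : 0 < c := Real.rpow_pos_of_pos (by positivity) _
    have ha_nonneg : ∀ z y, 0 ≤ auxA d p t z y := by
      intro z y
      exact mul_nonneg (mul_nonneg hc_pos.le (Real.exp_pos _).le) (hp0 y)
    have ha_le : ∀ z y, auxA d p t z y ≤ c * p y := by
      intro z y
      have he : Real.exp (-‖z - t • y‖ ^ 2 / (2 * s)) ≤ 1 := by
        apply Real.exp_le_one_iff.mpr
        rw [neg_div]
        have : (0:ℝ) ≤ ‖z - t • y‖ ^ 2 / (2 * s) := by positivity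
        linarith
      calc auxA d p t z y = c * Real.exp (-‖z - t • y‖ ^ 2 / (2 * s)) * p y := rfl
        _ ≤ c * 1 * p y := mul_le_mul_of_nonneg_right (mul_le_mul_of_nonneg_left he hc_pos.le) (hp0 y)
        _ = c * p y := by ring
    have ha_meas : ∀ z, AEStronglyMeasurable (fun y => auxA d p t z y) volume := by
      intro z
      apply AEStronglyMeasurable.mul _ hpm.aestronglyMeasurable
      apply Continuous.aestronglyMeasurable
      fun_prop
    have h_int_a : Integrable (fun y => auxA d p t x y) := by
      refine (hIp.const_mul c).mono' (ha_meas x) ?_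
      filter_upwards with y
      rw [Real.norm_eq_abs, abs_of_nonneg (ha_nonneg x y)]
      exact ha_le x y
    have h_int_ay : Integrable (fun y => auxA d p t x y • y) := by
      refine (hInp.const_mul c).mono' ((ha_meas x).smul aestronglyMeasurable_id) ?_
      filter_upwards with y
      rw [norm_smul, Real.norm_eq_abs, abs_of_nonneg (ha_nonneg x y)]
      calc auxA d p t x y * ‖y‖ ≤ (c * p y) * ‖y‖ :=
            mul_le_mul_of_nonneg_right (ha_le x y) (norm_nonneg y)
        _ = c * (‖y‖ * p y) := by ring
    have h_int_axy : Integrable (fun y => auxA d p t x y • (x - t • y)) := by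
      refine ((hIp.const_mul (c * ‖x‖)).add (hInp.const_mul c)).mono'
        ((ha_meas x).smul (aestronglyMeasurable_const.sub (aestronglyMeasurable_id.const_smul t))) ?_
      filter_upwards with y
      rw [norm_smul, Real.norm_eq_abs, abs_of_nonneg (ha_nonneg x y)]
      have hxy : ‖x - t • y‖ ≤ ‖x‖ + ‖y‖ := by
        calc ‖x - t • y‖ ≤ ‖x‖ + ‖t • y‖ := norm_sub_le _ _
          _ ≤ ‖x‖ + ‖y‖ := by
              rw [norm_smul, Real.norm_eq_abs, abs_of_nonneg ht0.le]
              nlinarith [norm_nonneg y]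
      calc auxA d p t x y * ‖x - t • y‖ ≤ (c * p y) * (‖x‖ + ‖y‖) := by
            have := ha_le x y
            have := ha_nonneg x y
            have : (0:ℝ) ≤ ‖x - t • y‖ := norm_nonneg _
            nlinarith [hp0 y, mul_nonneg (hp0 y) (norm_nonneg (x : Ed d)), norm_nonneg (x - t • y)]
        _ = c * ‖x‖ * p y + c * (‖y‖ * p y) := by ring
    -- positivity of qDens
    have hq_nonneg : 0 ≤ qDens p t x := by
      rw [qDens_eq]
      exact integral_nonneg (fun y => ha_nonneg x y)
    have hq_pos : 0 < qDens p t x := by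
      rcases hq_nonneg.lt_or_eq with h | h
      · exact h
      exfalso
      have h0 : ∫ y, auxA d p t x y = 0 := by rw [← qDens_eq, ← h]
      have hae : (fun y => auxA d p t x y) =ᵐ[volume] 0 :=
        (integral_eq_zero_iff_of_nonneg (fun y => ha_nonneg x y) h_int_a).mp h0
      have hpae : p =ᵐ[volume] 0 := by
        filter_upwards [hae] with y hy
        have hpos : 0 < c * Real.exp (-‖x - t • y‖ ^ 2 / (2 * s)) :=
          mul_pos hc_pos (Real.exp_pos _)
        have : c * Real.exp (-‖x - t • y‖ ^ 2 / (2 * s)) * p y = 0 := hy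
        simp only [Pi.zero_apply]
        rcases mul_eq_zero.mp this with h' | h'
        · exact absurd h' hpos.ne'
        · exact h'
      have : (1:ℝ) = 0 := by
        rw [← hp1, integral_congr_ae hpae]; simp
      norm_num at this
    -- derivative under the integral sign
    have hderiv : HasFDerivAt (fun z => qDens p t z)
        (∫ y, (auxA d p t x y * (-s⁻¹)) • (toDual ℝ (Ed d) (x - t • y) : Ed d →L[ℝ] ℝ)) x := by
      have := hasFDerivAt_integral_of_dominated_of_fderiv_le
        (F := fun z y => auxA d p t z y)
        (F' := fun z y => (auxA d p t z y * (-s⁻¹)) • (toDual ℝ (Ed d) (z - t • y) : Ed d →L[ℝ] ℝ))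
        (x₀ := x) (bound := fun y => (s⁻¹ * Real.sqrt (2 * s) * c) * p y)
        (s := Metric.ball x 1) (Metric.ball_mem_nhds x one_pos)
        (Eventually.of_forall fun z => ha_meas z)
        h_int_a
        ?_ ?_ ((hIp.const_mul _)) ?_
      · simpa only [qDens_eq] using this
      · -- measurability of F' x
        apply AEStronglyMeasurable.smul (f := fun y => auxA d p t x y * -s⁻¹)
          (g := fun y => (toDual ℝ (Ed d) (x - t • y) : Ed d →L[ℝ] ℝ))
        · exact ((ha_meas x).mul aestronglyMeasurable_const)
        · apply Continuous.aestronglyMeasurable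
          have hc1 : Continuous fun y : Ed d => x - t • y := by fun_prop
          exact (toDual ℝ (Ed d)).continuous.comp hc1
      · -- bound
        filter_upwards with y z hz
        have hns : ‖(auxA d p t z y * -s⁻¹) • (toDual ℝ (Ed d) (z - t • y) : Ed d →L[ℝ] ℝ)‖
            = |auxA d p t z y * -s⁻¹| * ‖(toDual ℝ (Ed d) (z - t • y) : Ed d →L[ℝ] ℝ)‖ := by
          rw [norm_smul, Real.norm_eq_abs]
        have hdual : ‖(toDual ℝ (Ed d) (z - t • y) : Ed d →L[ℝ] ℝ)‖ = ‖z - t • y‖ :=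
          LinearIsometryEquiv.norm_map _ _
        rw [hns, hdual, abs_mul, abs_of_nonneg (ha_nonneg z y), abs_neg, abs_inv,
          abs_of_nonneg hs.le]
        set r := ‖z - t • y‖ with hr
        have h1 : auxA d p t z y * s⁻¹ * r
            = s⁻¹ * c * p y * (r * Real.exp (-r ^ 2 / (2 * s))) := by
          simp only [auxA]
          ring
        rw [h1]
        have h2 : r * Real.exp (-r ^ 2 / (2 * s)) ≤ Real.sqrt (2 * s) :=
          aux_exp_bound r (2 * s) (norm_nonneg _) (by positivity)
        have h3 : 0 ≤ s⁻¹ * c * p y := mul_nonneg (mul_nonneg (inv_nonneg.mpr hs.le) hc_pos.le) (hp0 y)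
        calc s⁻¹ * c * p y * (r * Real.exp (-r ^ 2 / (2 * s)))
            ≤ s⁻¹ * c * p y * Real.sqrt (2 * s) := mul_le_mul_of_nonneg_left h2 h3
          _ = s⁻¹ * Real.sqrt (2 * s) * c * p y := by ring
      · -- pointwise differentiability
        filter_upwards with y z hz
        exact aux_hasFDerivAt s hs (t • y) z c (p y)
    -- rewrite the derivative as toDual of a vector
    have h_int_sxy : Integrable (fun y => (auxA d p t x y * (-s⁻¹)) • (x - t • y)) := by
      have : (fun y => (auxA d p t x y * (-s⁻¹)) • (x - t • y))
          = fun y => (-s⁻¹) • (auxA d p t x y • (x - t • y)) := by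
        funext y; rw [smul_smul, mul_comm]
      rw [this]
      exact h_int_axy.smul (-s⁻¹)
    have hdual_int : (∫ y, (auxA d p t x y * (-s⁻¹)) • (toDual ℝ (Ed d) (x - t • y) : Ed d →L[ℝ] ℝ))
        = toDual ℝ (Ed d) (∫ y, (auxA d p t x y * (-s⁻¹)) • (x - t • y)) := by
      have hL := ContinuousLinearMap.integral_comp_comm
        ((toDual ℝ (Ed d)).toContinuousLinearEquiv : Ed d ≃L[ℝ] (Ed d →L[ℝ] ℝ)).toContinuousLinearMap
        h_int_sxy
      simp only [ContinuousLinearEquiv.coe_coe, LinearIsometryEquiv.coe_toContinuousLinearEquiv,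
        _root_.map_smul] at hL
      exact hL
    set G : Ed d := ∫ y, (auxA d p t x y * (-s⁻¹)) • (x - t • y) with hG
    rw [hdual_int] at hderiv
    -- gradient of log
    have hlog : HasFDerivAt (fun z => Real.log (qDens p t z))
        (toDual ℝ (Ed d) ((qDens p t x)⁻¹ • G)) x := by
      have h5 := (Real.hasDerivAt_log hq_pos.ne').comp_hasFDerivAt x hderiv
      rw [show (qDens p t x)⁻¹ • (toDual ℝ (Ed d)) G = toDual ℝ (Ed d) ((qDens p t x)⁻¹ • G) from
        (_root_.map_smul _ _ _).symm] at h5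
      exact h5
    have hgrad : gradient (fun z => Real.log (qDens p t z)) x = (qDens p t x)⁻¹ • G :=
      HasGradientAt.gradient ((hasGradientAt_iff_hasFDerivAt).mpr hlog)
    -- compute G
    have hGval : G = (-s⁻¹) • ((qDens p t x) • x - t • (∫ y, auxA d p t x y • y)) := by
      rw [hG]
      have e1 : (fun y => (auxA d p t x y * (-s⁻¹)) • (x - t • y))
          = fun y => (-s⁻¹) • (auxA d p t x y • x - auxA d p t x y • (t • y)) := by
        funext y
        module
      rw [e1, integral_smul]
      congr 1
      rw [integral_sub (h_int_a.smul_const x) ?_]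
      · congr 1
        · exact integral_smul_const _ x
        · have e2 : (fun y => auxA d p t x y • (t • y)) = fun y => t • (auxA d p t x y • y) := by
            funext y; rw [smul_comm]
          rw [e2, integral_smul]
      · have e2 : (fun y => auxA d p t x y • (t • y)) = fun y => t • (auxA d p t x y • y) := by
          funext y; rw [smul_comm]
        rw [e2]
        exact h_int_ay.smul t
    -- final algebra
    rw [hgrad, hGval]
    have hq : qDens p t x ≠ 0 := hq_pos.ne'
    have hsne : s ≠ 0 := hs.ne'
    have htne : t ≠ 0 := ht0.ne'
    match_scalars
    · field_simp
      ring
    · field_simp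
  -- the limit part
  set K : ℝ := (2 * π) ^ (-(d : ℝ) / 2) * Real.exp (-‖x‖ ^ 2 / 2) with hK
  have hK_pos : 0 < K := mul_pos (Real.rpow_pos_of_pos (by positivity) _) (Real.exp_pos _)
  have hmem : Ioo (0:ℝ) (1/2) ∈ nhdsWithin (0:ℝ) (Set.Ioi 0) :=
    Ioo_mem_nhdsGT_of_mem (by constructor <;> norm_num)
  have ha_measg : ∀ (t : ℝ), AEStronglyMeasurable (fun y => auxA d p t x y) volume := by
    intro t
    apply AEStronglyMeasurable.mul _ hpm.aestronglyMeasurable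
    apply Continuous.aestronglyMeasurable
    fun_prop
  have hptw : ∀ y : Ed d, Tendsto (fun t : ℝ => auxA d p t x y) (nhdsWithin 0 (Set.Ioi 0))
      (nhds (K * p y)) := by
    intro y
    have hcont : ContinuousAt (fun t : ℝ => auxA d p t x y) 0 := by
      have h1 : ContinuousAt (fun t : ℝ => (2 * π * (1 - t ^ 2)) ^ (-(d : ℝ) / 2)) 0 := by
        apply ContinuousAt.rpow_const
        · fun_prop
        · left; norm_num [Real.pi_ne_zero]
      have h2 : ContinuousAt (fun t : ℝ => Real.exp (-‖x - t • y‖ ^ 2 / (2 * (1 - t ^ 2)))) 0 := by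
        apply Real.continuous_exp.continuousAt.comp
        apply ContinuousAt.div
        · fun_prop
        · fun_prop
        · norm_num
      exact (h1.mul h2).mul continuousAt_const
    have h0 : auxA d p 0 x y = K * p y := by
      simp only [auxA, hK]
      norm_num
    have h3 : Tendsto (fun t : ℝ => auxA d p t x y) (nhdsWithin 0 (Set.Ioi 0))
        (nhds (auxA d p 0 x y)) := hcont.continuousWithinAt
    rwa [h0] at h3
  have hbd : ∀ᶠ t : ℝ in nhdsWithin 0 (Set.Ioi 0), ∀ y : Ed d, |auxA d p t x y| ≤ p y := by
    filter_upwards [hmem] with t ht y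
    obtain ⟨ht0, ht2⟩ := ht
    have hs : 0 < 1 - t ^ 2 := by nlinarith
    have hc_pos : 0 < (2*π*(1-t^2)) ^ (-(d:ℝ)/2) := Real.rpow_pos_of_pos (by positivity) _
    have hc1 : (2*π*(1-t^2)) ^ (-(d:ℝ)/2) ≤ 1 := by
      apply Real.rpow_le_one_of_one_le_of_nonpos
      · nlinarith [Real.pi_gt_three]
      · have h4 : (0:ℝ) ≤ (d:ℝ) := Nat.cast_nonneg d
        linarith
    have he : Real.exp (-‖x - t • y‖ ^ 2 / (2 * (1-t^2))) ≤ 1 := by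
      apply Real.exp_le_one_iff.mpr
      rw [neg_div]
      have : (0:ℝ) ≤ ‖x - t • y‖ ^ 2 / (2 * (1-t^2)) := by positivity
      linarith
    have hnn : 0 ≤ auxA d p t x y :=
      mul_nonneg (mul_nonneg hc_pos.le (Real.exp_pos _).le) (hp0 y)
    rw [abs_of_nonneg hnn]
    calc auxA d p t x y ≤ 1 * 1 * p y := by
          simp only [auxA]
          exact mul_le_mul (mul_le_mul hc1 he (Real.exp_pos _).le zero_le_one) le_rfl
            (hp0 y) (by norm_num)
      _ = p y := by ring
  have hq_tend : Tendsto (fun t : ℝ => qDens p t x) (nhdsWithin 0 (Set.Ioi 0)) (nhds K) := by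
    have h := tendsto_integral_filter_of_dominated_convergence (μ := volume)
      (F := fun (t : ℝ) (y : Ed d) => auxA d p t x y) (f := fun y => K * p y) (bound := p)
      (Eventually.of_forall fun t => ha_measg t)
      (by filter_upwards [hbd] with t ht; filter_upwards with y; exact ht y)
      hIp
      (Eventually.of_forall fun y => hptw y)
    have h2 : ∫ y, K * p y = K := by
      simp_rw [← smul_eq_mul]
      rw [integral_smul, hp1]
      simp
    rw [h2] at h
    simpa only [qDens_eq] using h
  have hA_tend : Tendsto (fun t : ℝ => ∫ y, auxA d p t x y • y) (nhdsWithin 0 (Set.Ioi 0))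
      (nhds (K • m)) := by
    have h := tendsto_integral_filter_of_dominated_convergence (μ := volume)
      (F := fun (t : ℝ) (y : Ed d) => auxA d p t x y • y) (f := fun y => (K * p y) • y)
      (bound := fun y => ‖y‖ * p y)
      (Eventually.of_forall fun t => (ha_measg t).smul aestronglyMeasurable_id)
      (by
        filter_upwards [hbd] with t ht
        filter_upwards with y
        rw [norm_smul, Real.norm_eq_abs]
        calc |auxA d p t x y| * ‖y‖ ≤ p y * ‖y‖ :=
              mul_le_mul_of_nonneg_right (ht y) (norm_nonneg y)
          _ = ‖y‖ * p y := by ring)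
      hInp
      (Eventually.of_forall fun y => (hptw y).smul_const y)
    have h2 : ∫ y, (K * p y) • y = K • m := by
      have e : (fun y : Ed d => (K * p y) • y) = fun y => K • (p y • y) := by
        funext y; rw [← smul_smul]
      rw [e, integral_smul, hm]
    rw [h2] at h
    exact h
  have h_first : Tendsto (fun t : ℝ => (-(t/(1-t^2))) • x) (nhdsWithin 0 (Set.Ioi 0))
      (nhds (0 : Ed d)) := by
    have hct : ContinuousAt (fun t : ℝ => -(t/(1-t^2))) 0 := by
      apply ContinuousAt.neg
      exact ContinuousAt.div (by fun_prop) (by fun_prop) (by norm_num)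
    have h4 : Tendsto (fun t : ℝ => -(t/(1-t^2))) (nhdsWithin 0 (Set.Ioi 0))
        (nhds (-((0:ℝ)/(1-0^2)))) := hct.continuousWithinAt
    have h3 := h4.smul_const x
    norm_num at h3
    simpa using h3
  have h_second : Tendsto
      (fun t : ℝ => ((1-t^2) * qDens p t x)⁻¹ • (∫ y, auxA d p t x y • y))
      (nhdsWithin 0 (Set.Ioi 0)) (nhds m) := by
    have h1mt : Tendsto (fun t : ℝ => 1 - t^2) (nhdsWithin 0 (Set.Ioi 0)) (nhds (1:ℝ)) := by
      have hcc : ContinuousAt (fun t : ℝ => 1 - t^2) 0 := by fun_prop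
      have h4 : Tendsto (fun t : ℝ => 1 - t^2) (nhdsWithin 0 (Set.Ioi 0))
          (nhds (1 - (0:ℝ)^2)) := hcc.continuousWithinAt
      norm_num at h4
      exact h4
    have hscal : Tendsto (fun t : ℝ => ((1-t^2) * qDens p t x)⁻¹)
        (nhdsWithin 0 (Set.Ioi 0)) (nhds ((1 * K)⁻¹)) :=
      (h1mt.mul hq_tend).inv₀ (by simp [hK_pos.ne'])
    have h5 := hscal.smul hA_tend
    have h6 : (1 * K)⁻¹ • (K • m) = m := by
      rw [one_mul, smul_smul, inv_mul_cancel₀ hK_pos.ne', one_smul]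
    rwa [h6] at h5
  have hfinal := h_first.add h_second
  rw [zero_add] at hfinal
  refine Tendsto.congr' ?_ hfinal
  filter_upwards [hmem] with t ht
  exact (key t ht).symm
end
end

section
/- Let ν(dx) = p(x)dx be a probability measure on ℝ^d absolutely continuous with respect to γ_d. For every t ∈ (0,1) and x ∈ ℝ^d, the Jacobian of the Föllmer velocity field satisfies ∇_x V(t,x) = (t/(1-t²)²) Cov(p^{tx,1-t²}) - (t/(1-t²)) I_d, equivalently ∇²_x log 𝒬_{1-t} r(x) = (t²/(1-t²)²) Cov(p^{tx,1-t²}) - (t²/(1-t²)) I_d. -/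
open MeasureTheory Real Filter Set Matrix
open scoped ENNReal Pointwise

set_option maxHeartbeats 1000000
set_option synthInstance.maxHeartbeats 1000000
noncomputable section

namespace S3

variable {d : ℕ}

/-- the Gaussian-type kernel. -/
def eK (t : ℝ) (x y : Ed d) : ℝ :=
  Real.exp (t / (1 - t ^ 2) * inner ℝ x y - t ^ 2 / (2 * (1 - t ^ 2)) * ‖y‖ ^ 2)

/-- generic "Laplace transform". -/
def Gfn (g : Ed d → ℝ) (t : ℝ) (x : Ed d) : ℝ := ∫ y, g y * eK t x y

/-- generic vector moment. -/
def Vm (g : Ed d → ℝ) (t : ℝ) (x : Ed d) : Ed d := ∫ y, (g y * eK t x y) • y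

/-- bound constant -/
def Cbd (t R : ℝ) (k : ℕ) : ℝ :=
  Real.exp ((t / (1 - t ^ 2) * R + k) ^ 2 / (4 * (t ^ 2 / (2 * (1 - t ^ 2)))))


lemma eK_pos {t : ℝ} (x y : Ed d) : 0 < eK t x y := Real.exp_pos _

lemma bd_aux {β : ℝ} (hβ : 0 < β) (u : ℝ) (n : ℕ) :
    ∀ r : ℝ, 0 ≤ r → (1 + r) ^ n * Real.exp (u * r - β * r ^ 2) ≤
      Real.exp ((u + n) ^ 2 / (4 * β)) := by
  intro r hr
  have h1 : (1 + r) ^ n ≤ Real.exp (n * r) := by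
    calc (1 + r) ^ n ≤ (Real.exp r) ^ n := by
          apply pow_le_pow_left₀ (by linarith)
          linarith [Real.add_one_le_exp r]
    _ = Real.exp (n * r) := by rw [← Real.exp_nat_mul]
  calc (1 + r) ^ n * Real.exp (u * r - β * r ^ 2)
      ≤ Real.exp (n * r) * Real.exp (u * r - β * r ^ 2) := by
        apply mul_le_mul_of_nonneg_right h1 (Real.exp_pos _).le
    _ = Real.exp ((u + n) * r - β * r ^ 2) := by rw [← Real.exp_add]; ring_nf
    _ ≤ Real.exp ((u + n) ^ 2 / (4 * β)) := by
        apply Real.exp_le_exp.2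
        rw [le_div_iff₀ (by positivity)]
        nlinarith [sq_nonneg ((u + n) - 2 * β * r)]

lemma stdGaussDensity_pos (x : Ed d) : 0 < stdGaussDensity d x := by
  unfold stdGaussDensity
  positivity

lemma eK_le {t : ℝ} (ht : t ∈ Set.Ioo (0:ℝ) 1) {R : ℝ} {x : Ed d} (hx : ‖x‖ ≤ R) (hR : 0 ≤ R)
    (y : Ed d) (n : ℕ) :
    (1 + ‖y‖) ^ n * eK t x y ≤
      Real.exp ((t / (1 - t ^ 2) * R + n) ^ 2 / (4 * (t ^ 2 / (2 * (1 - t ^ 2))))) := by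
  obtain ⟨ht0, ht1⟩ := ht
  have hs2 : 0 < 1 - t ^ 2 := by nlinarith
  have hβ : 0 < t ^ 2 / (2 * (1 - t ^ 2)) := by positivity
  have hc : 0 < t / (1 - t ^ 2) := by positivity
  refine le_trans ?_ (bd_aux hβ (t / (1 - t ^ 2) * R) n ‖y‖ (norm_nonneg _))
  apply mul_le_mul_of_nonneg_left _ (by positivity)
  apply Real.exp_le_exp.2
  have : t / (1 - t ^ 2) * inner ℝ x y ≤ t / (1 - t ^ 2) * R * ‖y‖ := by
    have h2 : (inner ℝ x y : ℝ) ≤ ‖x‖ * ‖y‖ := real_inner_le_norm x y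
    have h3 : ‖x‖ * ‖y‖ ≤ R * ‖y‖ := mul_le_mul_of_nonneg_right hx (norm_nonneg _)
    calc t / (1 - t ^ 2) * inner ℝ x y ≤ t / (1 - t ^ 2) * (R * ‖y‖) := by
          apply mul_le_mul_of_nonneg_left (h2.trans h3) hc.le
      _ = t / (1 - t ^ 2) * R * ‖y‖ := by ring
  linarith

lemma eK_continuous (t : ℝ) (x : Ed d) : Continuous (fun y : Ed d => eK t x y) := by
  unfold eK
  apply Real.continuous_exp.comp
  apply Continuous.sub
  · exact continuous_const.mul (continuous_const.inner continuous_id)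
  · exact continuous_const.mul ((continuous_norm).pow 2)

lemma integral_apply {f : Ed d → Ed d} (hf : Integrable f) (i : Fin d) :
    (∫ y, f y) i = ∫ y, f y i := by
  have h := integral_inner (𝕜 := ℝ) hf (EuclideanSpace.single i (1:ℝ))
  simp only [EuclideanSpace.inner_single_left, starRingEnd_apply, star_one, one_mul] at h
  exact h.symm

lemma gradient_eq_of_hasFDerivAt {f : Ed d → ℝ} {u x : Ed d}
    (h : HasFDerivAt f (innerSL ℝ u) x) : gradient f x = u := by
  apply HasGradientAt.gradient
  rw [hasGradientAt_iff_hasFDerivAt]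
  have : (InnerProductSpace.toDual ℝ (Ed d)) u = innerSL ℝ u := by
    ext v; simp [InnerProductSpace.toDual_apply_apply]
  rw [this]
  exact h

section engine

variable {p g : Ed d → ℝ} {t : ℝ} (ht : t ∈ Set.Ioo (0:ℝ) 1)
  (hp : Integrable p) (hp0 : ∀ y, 0 ≤ p y) (hgm : Measurable g)
  {K : ℝ} {n : ℕ} (hbd : ∀ y, |g y| ≤ K * (1 + ‖y‖) ^ n * p y)

include ht hp hp0 hgm hbd

lemma key_bound {R : ℝ} (hR : 0 ≤ R) {x : Ed d} (hx : ‖x‖ ≤ R) (y : Ed d) (m : ℕ) :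
    (1 + ‖y‖) ^ m * |g y * eK t x y| ≤ K * Cbd t R (n + m) * p y := by
  have h1 : |g y * eK t x y| = |g y| * eK t x y := by
    rw [abs_mul, abs_of_pos (eK_pos x y)]
  have h2 : (1 + ‖y‖) ^ m * (|g y| * eK t x y) ≤
      (K * p y) * ((1 + ‖y‖) ^ (n + m) * eK t x y) := by
    have hstep : (1 + ‖y‖) ^ m * |g y| ≤ K * (1 + ‖y‖) ^ (n + m) * p y := by
      calc (1 + ‖y‖) ^ m * |g y| ≤ (1 + ‖y‖) ^ m * (K * (1 + ‖y‖) ^ n * p y) :=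
            mul_le_mul_of_nonneg_left (hbd y) (by positivity)
        _ = K * (1 + ‖y‖) ^ (n + m) * p y := by rw [pow_add]; ring
    calc (1 + ‖y‖) ^ m * (|g y| * eK t x y) = ((1 + ‖y‖) ^ m * |g y|) * eK t x y := by ring
      _ ≤ (K * (1 + ‖y‖) ^ (n + m) * p y) * eK t x y :=
          mul_le_mul_of_nonneg_right hstep (eK_pos x y).le
      _ = (K * p y) * ((1 + ‖y‖) ^ (n + m) * eK t x y) := by ring
  rw [h1]
  refine h2.trans ?_
  have h3 := eK_le ht hx hR y (n + m)
  have hK : 0 ≤ K * p y := by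
    have h4 := (abs_nonneg (g y)).trans (hbd y)
    have h5 : (0:ℝ) < (1 + ‖y‖) ^ n := pow_pos (by positivity) n
    nlinarith [h4, h5]
  have h6 : (1 + ‖y‖) ^ (n + m) * eK t x y ≤ Cbd t R (n + m) := by
    refine h3.trans (le_of_eq ?_)
    unfold Cbd
    norm_num
  calc (K * p y) * ((1 + ‖y‖) ^ (n + m) * eK t x y)
      ≤ (K * p y) * Cbd t R (n + m) := mul_le_mul_of_nonneg_left h6 hK
    _ = K * Cbd t R (n + m) * p y := by ring

lemma integrable_G (x : Ed d) : Integrable (fun y => g y * eK t x y) := by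
  apply Integrable.mono' (g := fun y => K * Cbd t ‖x‖ (n + 0) * p y)
  · exact (hp.const_mul _)
  · exact ((hgm.mul (eK_continuous t x).measurable)).aestronglyMeasurable
  · filter_upwards with y
    have h := key_bound ht hp hp0 hgm hbd (norm_nonneg x) le_rfl y 0
    rw [Real.norm_eq_abs]
    calc |g y * eK t x y| = (1 + ‖y‖) ^ 0 * |g y * eK t x y| := by rw [pow_zero, one_mul]
      _ ≤ K * Cbd t ‖x‖ (n + 0) * p y := h

lemma integrable_Vm (x : Ed d) : Integrable (fun y => (g y * eK t x y) • y) := by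
  apply Integrable.mono' (g := fun y => K * Cbd t ‖x‖ (n + 1) * p y)
  · exact (hp.const_mul _)
  · exact (((hgm.mul (eK_continuous t x).measurable)).aestronglyMeasurable.smul
      measurable_id.aestronglyMeasurable)
  · filter_upwards with y
    have h := key_bound ht hp hp0 hgm hbd (norm_nonneg x) le_rfl y 1
    rw [norm_smul]
    have h2 : ‖g y * eK t x y‖ * ‖y‖ ≤ (1 + ‖y‖) ^ 1 * |g y * eK t x y| := by
      rw [Real.norm_eq_abs, pow_one]
      nlinarith [abs_nonneg (g y * eK t x y), norm_nonneg y]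
    exact h2.trans h

lemma hasFDerivAt_kernel (y : Ed d) (x' : Ed d) :
    HasFDerivAt (fun w : Ed d => g y * eK t w y)
      ((t / (1 - t ^ 2) * (g y * eK t x' y)) • innerSL ℝ y) x' := by
  have h0 : HasFDerivAt (fun w : Ed d => (inner ℝ w y : ℝ)) (innerSL ℝ y) x' := by
    have h := (innerSL ℝ (E := Ed d) y).hasFDerivAt (x := x')
    refine h.congr_of_eventuallyEq (Filter.Eventually.of_forall fun w => ?_)
    show (inner ℝ w y : ℝ) = (innerSL ℝ y) w
    rw [show ((innerSL ℝ y) w : ℝ) = inner ℝ y w from rfl]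
    exact (real_inner_comm w y).symm
  have h1 := ((h0.const_mul (t / (1 - t ^ 2))).sub_const
      (t ^ 2 / (2 * (1 - t ^ 2)) * ‖y‖ ^ 2)).exp
  have h2 := h1.const_mul (g y)
  have h3 : (g y • Real.exp (t / (1 - t ^ 2) * inner ℝ x' y
        - t ^ 2 / (2 * (1 - t ^ 2)) * ‖y‖ ^ 2) • (t / (1 - t ^ 2)) • innerSL ℝ y)
      = (t / (1 - t ^ 2) * (g y * eK t x' y)) • innerSL ℝ y := by
    ext v
    simp only [ContinuousLinearMap.smul_apply, smul_eq_mul, eK]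
    ring
  rw [← h3]
  exact h2

lemma engine (x : Ed d) :
    HasFDerivAt (Gfn g t) (innerSL ℝ ((t / (1 - t ^ 2)) • Vm g t x)) x := by
  have hR : (0:ℝ) ≤ ‖x‖ + 1 := by positivity
  have hballR : ∀ w ∈ Metric.ball x 1, ‖w‖ ≤ ‖x‖ + 1 := by
    intro w hw
    have h1 : dist w x < 1 := Metric.mem_ball.1 hw
    have h2 := norm_sub_norm_le w x
    rw [dist_eq_norm] at h1
    linarith
  have hbound : ∀ y : Ed d, ∀ w ∈ Metric.ball x 1,
      ‖(t / (1 - t ^ 2) * (g y * eK t w y)) • innerSL ℝ y‖ ≤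
        |t / (1 - t ^ 2)| * (K * Cbd t (‖x‖ + 1) (n + 1)) * p y := by
    intro y w hw
    rw [norm_smul (t / (1 - t ^ 2) * (g y * eK t w y)) (innerSL ℝ (E := Ed d) y),
      innerSL_apply_norm]
    have h1 : ‖t / (1 - t ^ 2) * (g y * eK t w y)‖ * ‖y‖ ≤
        |t / (1 - t ^ 2)| * ((1 + ‖y‖) ^ 1 * |g y * eK t w y|) := by
      rw [Real.norm_eq_abs, abs_mul, pow_one]
      have := abs_nonneg (g y * eK t w y)
      nlinarith [abs_nonneg (t / (1 - t ^ 2)), norm_nonneg y]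
    refine h1.trans ?_
    have h2 := key_bound ht hp hp0 hgm hbd hR (hballR w hw) y 1
    calc |t / (1 - t ^ 2)| * ((1 + ‖y‖) ^ 1 * |g y * eK t w y|)
        ≤ |t / (1 - t ^ 2)| * (K * Cbd t (‖x‖ + 1) (n + 1) * p y) :=
          mul_le_mul_of_nonneg_left h2 (abs_nonneg _)
      _ = |t / (1 - t ^ 2)| * (K * Cbd t (‖x‖ + 1) (n + 1)) * p y := by ring
  have hmeas' : AEStronglyMeasurable
      (fun y => (t / (1 - t ^ 2) * (g y * eK t x y)) • innerSL ℝ y) volume := by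
    refine AEStronglyMeasurable.smul (f := fun y => t / (1 - t ^ 2) * (g y * eK t x y))
      (g := fun y => innerSL ℝ y) ?_ ?_
    · exact ((measurable_const.mul (hgm.mul
        (eK_continuous t x).measurable))).aestronglyMeasurable
    · exact (innerSL ℝ (E := Ed d)).continuous.aestronglyMeasurable
  have hderiv := hasFDerivAt_integral_of_dominated_of_fderiv_le (μ := volume) (𝕜 := ℝ)
    (F := fun w y => g y * eK t w y)
    (F' := fun w y => (t / (1 - t ^ 2) * (g y * eK t w y)) • innerSL ℝ y) (x₀ := x)
    (bound := fun y => |t / (1 - t ^ 2)| * (K * Cbd t (‖x‖ + 1) (n + 1)) * p y)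
    (Metric.ball_mem_nhds x one_pos)
    (Filter.Eventually.of_forall fun w =>
      ((hgm.mul (eK_continuous t w).measurable)).aestronglyMeasurable)
    (integrable_G ht hp hp0 hgm hbd x)
    hmeas'
    (Filter.Eventually.of_forall fun y => fun w hw => hbound y w hw)
    (hp.const_mul _)
    (Filter.Eventually.of_forall fun y => fun w hw =>
      hasFDerivAt_kernel ht hp hp0 hgm hbd y w)
  have hintF' : Integrable
      (fun y => (t / (1 - t ^ 2) * (g y * eK t x y)) • innerSL ℝ y) volume := by
    apply Integrable.mono'
      (g := fun y => |t / (1 - t ^ 2)| * (K * Cbd t (‖x‖ + 1) (n + 1)) * p y)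
    · exact hp.const_mul _
    · exact hmeas'
    · filter_upwards with y
      exact hbound y x (Metric.mem_ball_self one_pos)
  have hD : (∫ y, (t / (1 - t ^ 2) * (g y * eK t x y)) • innerSL ℝ y)
      = innerSL ℝ ((t / (1 - t ^ 2)) • Vm g t x) := by
    ext v
    rw [ContinuousLinearMap.integral_apply hintF' v]
    have hpt : ∀ y, ((t / (1 - t ^ 2) * (g y * eK t x y)) • innerSL ℝ y) v
        = t / (1 - t ^ 2) * (inner ℝ v ((g y * eK t x y) • y) : ℝ) := by
      intro y
      simp only [ContinuousLinearMap.smul_apply, smul_eq_mul]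
      rw [show ((innerSL ℝ y) v : ℝ) = inner ℝ y v from rfl,
        real_inner_smul_right, real_inner_comm]
      ring
    calc (∫ y, ((t / (1 - t ^ 2) * (g y * eK t x y)) • innerSL ℝ y) v)
        = ∫ y, t / (1 - t ^ 2) * (inner ℝ v ((g y * eK t x y) • y) : ℝ) := by
          simp_rw [hpt]
      _ = t / (1 - t ^ 2) * ∫ y, (inner ℝ v ((g y * eK t x y) • y) : ℝ) := by
          rw [integral_const_mul]
      _ = t / (1 - t ^ 2) * (inner ℝ v (Vm g t x) : ℝ) := by
          rw [integral_inner (integrable_Vm ht hp hp0 hgm hbd x) v]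
          rfl
      _ = (innerSL ℝ ((t / (1 - t ^ 2)) • Vm g t x)) v := by
          rw [show ((innerSL ℝ ((t / (1 - t ^ 2)) • Vm g t x)) v : ℝ)
              = inner ℝ ((t / (1 - t ^ 2)) • Vm g t x) v from rfl,
            real_inner_smul_left, real_inner_comm]
  rw [← hD]
  exact hderiv

end engine

lemma stdGaussDensity_meas : Measurable (stdGaussDensity d) := by
  unfold stdGaussDensity
  exact (measurable_const.mul ((measurable_norm.pow_const 2).neg.div_const 2).exp)

/-- scaling of the standard normal density -/

lemma norm_sub_smul (t : ℝ) (x y : Ed d) :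
    ‖y - t • x‖ ^ 2 = ‖y‖ ^ 2 - 2 * (t * inner ℝ x y) + t ^ 2 * ‖x‖ ^ 2 := by
  rw [norm_sub_sq_real, real_inner_smul_right, norm_smul]
  rw [real_inner_comm y x]
  rw [mul_pow]
  simp [sq_abs]

/-- scaling of the standard normal density -/
lemma scale_std {s2 : ℝ} (hs2 : 0 < s2) (v : Ed d) :
    ((Real.sqrt s2 ^ d : ℝ))⁻¹ * stdGaussDensity d ((Real.sqrt s2)⁻¹ • v) =
      (2 * π * s2) ^ (-(d : ℝ) / 2) * Real.exp (-‖v‖ ^ 2 / (2 * s2)) := by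
  have hσ : 0 < Real.sqrt s2 := Real.sqrt_pos.2 hs2
  have h2π : (0:ℝ) < 2 * π := by positivity
  unfold stdGaussDensity
  have hnorm : ‖(Real.sqrt s2)⁻¹ • v‖ ^ 2 = ‖v‖ ^ 2 / s2 := by
    rw [norm_smul, mul_pow, Real.norm_eq_abs, sq_abs, inv_pow, Real.sq_sqrt hs2.le]
    ring
  have hcoef : ((Real.sqrt s2 ^ d : ℝ))⁻¹ * (2 * π) ^ (-(d:ℝ)/2) = (2 * π * s2) ^ (-(d:ℝ)/2) := by
    rw [mul_rpow h2π.le hs2.le]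
    have h1 : (Real.sqrt s2 : ℝ) ^ d = s2 ^ ((d:ℝ)/2) := by
      rw [← Real.rpow_natCast (Real.sqrt s2) d, Real.sqrt_eq_rpow, ← Real.rpow_mul hs2.le]
      congr 1
      ring
    rw [h1, ← Real.rpow_neg hs2.le]
    rw [show -((d:ℝ)/2) = -(d:ℝ)/2 by ring]
    ring
  rw [hnorm, ← hcoef]
  have : -(‖v‖ ^ 2 / s2) / 2 = -‖v‖ ^ 2 / (2 * s2) := by ring
  rw [this]
  ring


lemma kernel_eq (p : Ed d → ℝ) {t : ℝ} (ht : t ∈ Set.Ioo (0:ℝ) 1) (x y : Ed d) :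
    gaussDensity (t • x) (1 - t ^ 2) y * relDensity p y =
      (1 - t ^ 2) ^ (-(d : ℝ) / 2) *
        Real.exp (-(t ^ 2 / (2 * (1 - t ^ 2))) * ‖x‖ ^ 2) * (p y * eK t x y) := by
  obtain ⟨ht0, ht1⟩ := ht
  have hs2 : (0:ℝ) < 1 - t ^ 2 := by nlinarith
  have h2π : (0:ℝ) < 2 * π := by positivity
  have hstd : (0:ℝ) < stdGaussDensity d y := by unfold stdGaussDensity; positivity
  rw [relDensity, div_eq_mul_inv, gaussDensity]
  rw [mul_rpow h2π.le hs2.le]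
  rw [stdGaussDensity, mul_inv, ← Real.exp_neg]
  have hpow : ((2 * π) ^ (-(d:ℝ)/2) : ℝ) ≠ 0 := by positivity
  have hexp : Real.exp (-‖y - t • x‖ ^ 2 / (2 * (1 - t ^ 2))) * Real.exp (-(-‖y‖ ^ 2 / 2)) =
      Real.exp (-(t ^ 2 / (2 * (1 - t ^ 2))) * ‖x‖ ^ 2) * eK t x y := by
    rw [← Real.exp_add, eK, ← Real.exp_add]
    congr 1
    rw [norm_sub_smul]
    field_simp
    ring
  calc (2 * π) ^ (-(d:ℝ)/2) * (1 - t ^ 2) ^ (-(d:ℝ)/2) *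
        Real.exp (-‖y - t • x‖ ^ 2 / (2 * (1 - t ^ 2))) *
        (p y * (((2 * π) ^ (-(d:ℝ)/2))⁻¹ * Real.exp (-(-‖y‖ ^ 2 / 2))))
      = ((2 * π) ^ (-(d:ℝ)/2) * ((2 * π) ^ (-(d:ℝ)/2))⁻¹) * ((1 - t ^ 2) ^ (-(d:ℝ)/2) * p y *
          (Real.exp (-‖y - t • x‖ ^ 2 / (2 * (1 - t ^ 2))) * Real.exp (-(-‖y‖ ^ 2 / 2)))) := by
        ring
    _ = (1 - t ^ 2) ^ (-(d:ℝ)/2) * p y *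
          (Real.exp (-(t ^ 2 / (2 * (1 - t ^ 2))) * ‖x‖ ^ 2) * eK t x y) := by
        rw [mul_inv_cancel₀ hpow, hexp]; ring
    _ = (1 - t ^ 2) ^ (-(d:ℝ)/2) *
        Real.exp (-(t ^ 2 / (2 * (1 - t ^ 2))) * ‖x‖ ^ 2) * (p y * eK t x y) := by ring

/-- change of variables: `Qop` as an explicit integral. -/
lemma qop_eq (p : Ed d → ℝ) {t : ℝ} (ht : t ∈ Set.Ioo (0:ℝ) 1) (hpm : Measurable p) (x : Ed d) :
    Qop p t x = (1 - t ^ 2) ^ (-(d : ℝ) / 2) *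
      Real.exp (-(t ^ 2 / (2 * (1 - t ^ 2))) * ‖x‖ ^ 2) * Gfn p t x := by
  obtain ⟨ht0, ht1⟩ := ht
  have hs2 : (0:ℝ) < 1 - t ^ 2 := by nlinarith
  set σ := Real.sqrt (1 - t ^ 2) with hσdef
  have hσ : 0 < σ := Real.sqrt_pos.2 hs2
  -- step 1: unfold the Gaussian measure
  have step1 : Qop p t x = ∫ z, stdGaussDensity d z * relDensity p (t • x + σ • z) := by
    rw [Qop, stdGaussian]
    have hmeas : Measurable (fun z => (stdGaussDensity d z).toNNReal) :=
      stdGaussDensity_meas.real_toNNReal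
    have : (fun z : Ed d => ENNReal.ofReal (stdGaussDensity d z)) =
        fun z : Ed d => ((stdGaussDensity d z).toNNReal : ℝ≥0∞) := rfl
    rw [this, integral_withDensity_eq_integral_smul hmeas]
    congr 1
    funext z
    rw [NNReal.smul_def, Real.coe_toNNReal _ (stdGaussDensity_pos z).le, smul_eq_mul]
  -- step 2: substitute
  set G : Ed d → ℝ := fun w => stdGaussDensity d (σ⁻¹ • (w - t • x)) * relDensity p w with hG
  have step2 : ∀ z : Ed d, stdGaussDensity d z * relDensity p (t • x + σ • z) =
      G (t • x + σ • z) := by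
    intro z
    rw [hG]
    congr 2
    rw [add_sub_cancel_left, smul_smul, inv_mul_cancel₀ hσ.ne', one_smul]
  rw [step1]
  simp_rw [step2]
  have step3 : (∫ z, G (t • x + σ • z)) = ((σ ^ d : ℝ))⁻¹ * ∫ w, G w := by
    have h1 : (∫ z, G (t • x + σ • z)) = ∫ z, (fun w => G (t • x + w)) (σ • z) := rfl
    rw [h1, MeasureTheory.Measure.integral_comp_smul volume (fun w => G (t • x + w)) σ]
    rw [finrank_euclideanSpace_fin]
    rw [MeasureTheory.integral_add_left_eq_self (fun w => G w) (t • x)]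
    rw [abs_of_pos (by positivity), smul_eq_mul]
  rw [step3]
  rw [← integral_const_mul]
  have step4 : ∀ y : Ed d, ((σ ^ d : ℝ))⁻¹ * G y =
      (1 - t ^ 2) ^ (-(d : ℝ) / 2) *
        Real.exp (-(t ^ 2 / (2 * (1 - t ^ 2))) * ‖x‖ ^ 2) * (p y * eK t x y) := by
    intro y
    rw [hG, ← mul_assoc]
    have := scale_std hs2 (y - t • x)
    rw [hσdef] at *
    rw [this]
    have : (2 * π * (1 - t ^ 2)) ^ (-(d : ℝ) / 2) *
        Real.exp (-‖y - t • x‖ ^ 2 / (2 * (1 - t ^ 2))) = gaussDensity (t • x) (1 - t ^ 2) y := rfl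
    rw [this]
    exact kernel_eq p ⟨ht0, ht1⟩ x y
  simp_rw [step4]
  rw [integral_const_mul, Gfn]

lemma integrable_of_integral_one {p : Ed d → ℝ} (hp1 : ∫ y, p y = 1) : Integrable p := by
  by_contra h
  rw [MeasureTheory.integral_undef h] at hp1
  exact one_ne_zero hp1.symm

lemma Gfn_pos {p : Ed d → ℝ} (hpm : Measurable p) (hp0 : ∀ y, 0 ≤ p y)
    (hp1 : ∫ y, p y = 1) {t : ℝ} (ht : t ∈ Set.Ioo (0:ℝ) 1) (x : Ed d) :
    0 < Gfn p t x := by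
  have hp : Integrable p := by
    by_contra h
    rw [MeasureTheory.integral_undef h] at hp1
    exact one_ne_zero hp1.symm
  have hint : Integrable (fun y => p y * eK t x y) := integrable_G ht hp hp0 hpm
      (K := 1) (n := 0) (fun y => by simp [abs_of_nonneg (hp0 y)]) x
  have hnn : 0 ≤ fun y => p y * eK t x y := fun y => mul_nonneg (hp0 y) (eK_pos x y).le
  rw [Gfn, integral_pos_iff_support_of_nonneg hnn hint]
  have hsupp : Function.support p ⊆ Function.support (fun y => p y * eK t x y) := by
    intro y hy
    exact mul_ne_zero hy (eK_pos x y).ne'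
  have hp_pos : 0 < volume (Function.support p) := by
    by_contra h
    push_neg at h
    have h0 : volume (Function.support p) = 0 := le_antisymm (by exact le_of_not_gt (by simpa using h)) zero_le
    have hae : ∀ᵐ y, y ∉ Function.support p := (MeasureTheory.measure_eq_zero_iff_ae_notMem).1 h0
    have : ∫ y, p y = 0 := by
      rw [MeasureTheory.integral_eq_zero_iff_of_nonneg hp0 hp]
      filter_upwards [hae] with y hy
      simpa using Function.notMem_support.1 hy
    rw [this] at hp1
    exact one_ne_zero hp1.symm
  exact lt_of_lt_of_le hp_pos (measure_mono hsupp)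

lemma final_algebra (t L N Gi Gj δ : ℝ) (ht0 : 0 < t) (hs2 : 0 < 1 - t^2) (hL : 0 < L) :
    1 / t * (-(2 * (t ^ 2 / (2 * (1 - t ^ 2)))) * δ +
      t / (1 - t ^ 2) * (L⁻¹ * (t / (1 - t ^ 2) * N) +
        Gi * (-(L ^ 2)⁻¹ * (t / (1 - t ^ 2) * Gj)))) =
    t / (1 - t ^ 2) ^ 2 * (L⁻¹ * N - L⁻¹ * Gi * (L⁻¹ * Gj)) - t / (1 - t ^ 2) * δ := by
  field_simp
  ring

lemma cov_algebra (L N Gi Gj : ℝ) (hL : 0 < L) :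
    L⁻¹ * N - L⁻¹ * (L⁻¹ * Gj) * Gi - L⁻¹ * (L⁻¹ * Gi) * Gj + L⁻¹ * (L⁻¹ * Gi) * (L⁻¹ * Gj) * L
      = L⁻¹ * N - L⁻¹ * Gi * (L⁻¹ * Gj) := by
  field_simp
  ring

end S3

/-- representation of the Jacobian of the Föllmer velocity field,
`∇V(t,x) = (t/(1-t²)²) Cov(p^{tx,1-t²}) - (t/(1-t²)) I_d`. -/
theorem statement3 (d : ℕ) (p : Ed d → ℝ) (hpm : Measurable p) (hp0 : ∀ y, 0 ≤ p y)
    (hp1 : ∫ y, p y = 1) (t : ℝ) (ht : t ∈ Set.Ioo (0 : ℝ) 1) (x : Ed d) :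
    jacobianV p t x =
      (t / (1 - t ^ 2) ^ 2) • covMatrix (pCond p t x) -
        (t / (1 - t ^ 2)) • (1 : Matrix (Fin d) (Fin d) ℝ) := by
  obtain ⟨ht0, ht1⟩ := ht
  have htIoo : t ∈ Set.Ioo (0:ℝ) 1 := ⟨ht0, ht1⟩
  have hs2 : (0:ℝ) < 1 - t ^ 2 := by nlinarith
  have hp : Integrable p := S3.integrable_of_integral_one hp1
  have habs : ∀ (k : Fin d) (y : Ed d), |y k| ≤ ‖y‖ := by
    intro k y
    have h := abs_real_inner_le_norm (EuclideanSpace.single k (1:ℝ)) y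
    simpa [EuclideanSpace.inner_single_left, EuclideanSpace.norm_single] using h
  have hbd0 : ∀ y : Ed d, |p y| ≤ 1 * (1 + ‖y‖) ^ 0 * p y := by
    intro y; simp [abs_of_nonneg (hp0 y)]
  have hbd1 : ∀ k : Fin d, ∀ y : Ed d, |p y * y k| ≤ 1 * (1 + ‖y‖) ^ 1 * p y := by
    intro k y
    rw [abs_mul, abs_of_nonneg (hp0 y), one_mul, pow_one]
    calc p y * |y k| ≤ p y * ‖y‖ := mul_le_mul_of_nonneg_left (habs k y) (hp0 y)
      _ ≤ (1 + ‖y‖) * p y := by nlinarith [hp0 y, norm_nonneg y]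
  have hbd2 : ∀ k l : Fin d, ∀ y : Ed d, |p y * y k * y l| ≤ 1 * (1 + ‖y‖) ^ 2 * p y := by
    intro k l y
    rw [abs_mul, abs_mul, abs_of_nonneg (hp0 y), one_mul]
    nlinarith [habs k y, habs l y, hp0 y, norm_nonneg y, abs_nonneg (y k), abs_nonneg (y l),
      mul_le_mul (habs k y) (habs l y) (abs_nonneg (y l)) (norm_nonneg y),
      mul_nonneg (hp0 y) (mul_nonneg (abs_nonneg (y k)) (abs_nonneg (y l)))]
  have hm1 : ∀ k : Fin d, Measurable fun y : Ed d => p y * y k :=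
    fun k => hpm.mul (EuclideanSpace.proj k : Ed d →L[ℝ] ℝ).continuous.measurable
  have hLpos : ∀ w : Ed d, 0 < S3.Gfn p t w := fun w => S3.Gfn_pos hpm hp0 hp1 htIoo w
  -- gradient identity
  have hgrad : ∀ w : Ed d, gradient (fun y => Real.log (Qop p t y)) w =
      (-(2 * (t ^ 2 / (2 * (1 - t ^ 2))))) • w +
        ((S3.Gfn p t w)⁻¹ * (t / (1 - t ^ 2))) • S3.Vm p t w := by
    intro w
    apply S3.gradient_eq_of_hasFDerivAt
    have hfe : (fun y => Real.log (Qop p t y)) = fun y =>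
        (Real.log ((1 - t ^ 2) ^ (-(d : ℝ) / 2)) + -(t ^ 2 / (2 * (1 - t ^ 2))) * ‖y‖ ^ 2)
          + Real.log (S3.Gfn p t y) := by
      funext y
      rw [S3.qop_eq p htIoo hpm y]
      have hA : ((1 - t ^ 2 : ℝ) ^ (-(d:ℝ)/2)) ≠ 0 := by positivity
      rw [Real.log_mul (mul_ne_zero hA (Real.exp_ne_zero _)) (hLpos y).ne',
        Real.log_mul hA (Real.exp_ne_zero _), Real.log_exp]
    rw [hfe]
    have hL := S3.engine htIoo hp hp0 hpm hbd0 w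
    have hlog := hL.log (hLpos w).ne'
    have hn : HasFDerivAt (fun y : Ed d => ‖y‖ ^ 2) (innerSL ℝ ((2:ℝ) • w)) w := by
      have h := (hasFDerivAt_id w).norm_sq
      have heq : (innerSL ℝ ((2:ℝ) • w)) =
          (2 • ((innerSL ℝ) (id w)).comp (ContinuousLinearMap.id ℝ (Ed d))) := by
        ext v
        have h1 : (innerSL ℝ ((2:ℝ) • w)) v = (inner ℝ ((2:ℝ) • w) v : ℝ) := rfl
        have h2 : ((2 • ((innerSL ℝ) (id w)).comp (ContinuousLinearMap.id ℝ (Ed d))) v : ℝ)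
            = (inner ℝ w v : ℝ) + (inner ℝ w v : ℝ) := by
          rw [two_smul]
          rfl
        rw [h1, h2, real_inner_smul_left]
        ring
      rw [heq]
      exact h
    have hcomb := ((hn.const_mul (-(t ^ 2 / (2 * (1 - t ^ 2))))).const_add
        (Real.log ((1 - t ^ 2) ^ (-(d : ℝ) / 2)))).add hlog
    have heq2 : (innerSL ℝ ((-(2 * (t ^ 2 / (2 * (1 - t ^ 2))))) • w +
          ((S3.Gfn p t w)⁻¹ * (t / (1 - t ^ 2))) • S3.Vm p t w)) =
        ((-(t ^ 2 / (2 * (1 - t ^ 2)))) • innerSL ℝ ((2:ℝ) • w) +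
          (S3.Gfn p t w)⁻¹ • innerSL ℝ ((t / (1 - t ^ 2)) • S3.Vm p t w)) := by
      ext v
      have e1 : ∀ u : Ed d, (innerSL ℝ u) v = (inner ℝ u v : ℝ) := fun u => rfl
      simp only [ContinuousLinearMap.add_apply, ContinuousLinearMap.smul_apply,
        smul_eq_mul, e1, inner_add_left, real_inner_smul_left]
      ring
    rw [heq2]
    exact hcomb
  -- components of the vector moments
  have hVmi : ∀ (k : Fin d) (w : Ed d),
      S3.Vm p t w k = S3.Gfn (fun z => p z * z k) t w := by
    intro k w
    rw [S3.Vm, S3.integral_apply (S3.integrable_Vm htIoo hp hp0 hpm hbd0 w) k, S3.Gfn]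
    congr 1
    funext z
    simp only [PiLp.smul_apply, smul_eq_mul]
    ring
  have hVgi : ∀ (k l : Fin d) (w : Ed d),
      S3.Vm (fun z => p z * z k) t w l = S3.Gfn (fun z => p z * z k * z l) t w := by
    intro k l w
    rw [S3.Vm, S3.integral_apply (S3.integrable_Vm htIoo hp hp0 (hm1 k) (hbd1 k) w) l, S3.Gfn]
    congr 1
    funext z
    simp only [PiLp.smul_apply, smul_eq_mul]
    ring
  -- the velocity field, coordinatewise
  have hfun : ∀ i : Fin d, (fun y => follmerV p t y i) = fun y =>
      1 / t * (-(2 * (t ^ 2 / (2 * (1 - t ^ 2)))) * y i +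
        t / (1 - t ^ 2) * ((S3.Gfn p t y)⁻¹ * S3.Gfn (fun z => p z * z i) t y)) := by
    intro i
    funext y
    rw [follmerV, hgrad y]
    simp only [PiLp.smul_apply, PiLp.add_apply, smul_eq_mul]
    rw [hVmi i y]
    ring
  -- conditional density computations
  ext i j
  have hAE : ((1 - t ^ 2 : ℝ) ^ (-(d:ℝ)/2) *
      Real.exp (-(t ^ 2 / (2 * (1 - t ^ 2))) * ‖x‖ ^ 2)) ≠ 0 := by positivity
  have hdens : pCond p t x = volume.withDensity
      (fun y => ENNReal.ofReal ((p y * S3.eK t x y) / S3.Gfn p t x)) := by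
    rw [pCond]
    congr 1
    funext y
    rw [S3.kernel_eq p htIoo x y, S3.qop_eq p htIoo hpm x,
      mul_div_mul_left _ _ hAE]
  have hmeasd : Measurable (fun y => ((p y * S3.eK t x y) / S3.Gfn p t x).toNNReal) :=
    ((hpm.mul (S3.eK_continuous t x).measurable).div_const _).real_toNNReal
  have hdnn : ∀ y : Ed d, 0 ≤ (p y * S3.eK t x y) / S3.Gfn p t x := fun y =>
    div_nonneg (mul_nonneg (hp0 y) (S3.eK_pos x y).le) (hLpos x).le
  have hmeanj : ∀ k : Fin d, meanVec (pCond p t x) k =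
      (S3.Gfn p t x)⁻¹ * S3.Gfn (fun z => p z * z k) t x := by
    intro k
    rw [meanVec, hdens]
    rw [show (fun y => ENNReal.ofReal ((p y * S3.eK t x y) / S3.Gfn p t x)) =
        fun y => (((p y * S3.eK t x y) / S3.Gfn p t x).toNNReal : ℝ≥0∞) from rfl]
    rw [integral_withDensity_eq_integral_smul hmeasd]
    have hrw : (fun y : Ed d => ((p y * S3.eK t x y) / S3.Gfn p t x).toNNReal • y) =
        fun y : Ed d => (S3.Gfn p t x)⁻¹ • ((p y * S3.eK t x y) • y) := by
      funext y
      rw [NNReal.smul_def, Real.coe_toNNReal _ (hdnn y), div_eq_mul_inv, mul_comm, mul_smul]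
    rw [hrw, integral_smul]
    have hVm : (∫ y : Ed d, (p y * S3.eK t x y) • y) = S3.Vm p t x := rfl
    rw [hVm]
    simp only [PiLp.smul_apply, smul_eq_mul]
    rw [hVmi k x]
  have hcov : covMatrix (pCond p t x) i j =
      (S3.Gfn p t x)⁻¹ * S3.Gfn (fun z => p z * z i * z j) t x
        - ((S3.Gfn p t x)⁻¹ * S3.Gfn (fun z => p z * z i) t x) *
            ((S3.Gfn p t x)⁻¹ * S3.Gfn (fun z => p z * z j) t x) := by
    have hmi := hmeanj i
    have hmj := hmeanj j
    rw [covMatrix, Matrix.of_apply]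
    set a := meanVec (pCond p t x) i with ha
    set b := meanVec (pCond p t x) j with hb
    rw [hdens]
    rw [show (fun y => ENNReal.ofReal ((p y * S3.eK t x y) / S3.Gfn p t x)) =
        fun y => (((p y * S3.eK t x y) / S3.Gfn p t x).toNNReal : ℝ≥0∞) from rfl]
    rw [integral_withDensity_eq_integral_smul hmeasd]
    have hptw : (fun y : Ed d =>
          ((p y * S3.eK t x y) / S3.Gfn p t x).toNNReal • ((y i - a) * (y j - b))) =
        fun y : Ed d =>
          (S3.Gfn p t x)⁻¹ * ((p y * y i * y j) * S3.eK t x y)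
            - (S3.Gfn p t x)⁻¹ * b * ((p y * y i) * S3.eK t x y)
            - (S3.Gfn p t x)⁻¹ * a * ((p y * y j) * S3.eK t x y)
            + (S3.Gfn p t x)⁻¹ * a * b * (p y * S3.eK t x y) := by
      funext y
      rw [NNReal.smul_def, Real.coe_toNNReal _ (hdnn y), smul_eq_mul, div_eq_mul_inv]
      ring
    rw [hptw]
    have hI2 : Integrable (fun y : Ed d => (p y * y i * y j) * S3.eK t x y) :=
      S3.integrable_G htIoo hp hp0 ((hm1 i).mul (EuclideanSpace.proj j : Ed d →L[ℝ] ℝ).continuous.measurable) (hbd2 i j) x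
    have hIi : Integrable (fun y : Ed d => (p y * y i) * S3.eK t x y) :=
      S3.integrable_G htIoo hp hp0 (hm1 i) (hbd1 i) x
    have hIj : Integrable (fun y : Ed d => (p y * y j) * S3.eK t x y) :=
      S3.integrable_G htIoo hp hp0 (hm1 j) (hbd1 j) x
    have hI0 : Integrable (fun y : Ed d => p y * S3.eK t x y) :=
      S3.integrable_G htIoo hp hp0 hpm hbd0 x
    have hS2 : Integrable (fun y : Ed d =>
        (S3.Gfn p t x)⁻¹ * ((p y * y i * y j) * S3.eK t x y)) := hI2.const_mul _
    have hSi : Integrable (fun y : Ed d =>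
        (S3.Gfn p t x)⁻¹ * b * ((p y * y i) * S3.eK t x y)) := hIi.const_mul _
    have hSj : Integrable (fun y : Ed d =>
        (S3.Gfn p t x)⁻¹ * a * ((p y * y j) * S3.eK t x y)) := hIj.const_mul _
    have hS0 : Integrable (fun y : Ed d =>
        (S3.Gfn p t x)⁻¹ * a * b * (p y * S3.eK t x y)) := hI0.const_mul _
    have hSL1 : Integrable (fun y : Ed d =>
        (S3.Gfn p t x)⁻¹ * ((p y * y i * y j) * S3.eK t x y)
          - (S3.Gfn p t x)⁻¹ * b * ((p y * y i) * S3.eK t x y)) := hS2.sub hSi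
    have hSL2 : Integrable (fun y : Ed d =>
        ((S3.Gfn p t x)⁻¹ * ((p y * y i * y j) * S3.eK t x y)
          - (S3.Gfn p t x)⁻¹ * b * ((p y * y i) * S3.eK t x y))
          - (S3.Gfn p t x)⁻¹ * a * ((p y * y j) * S3.eK t x y)) := hSL1.sub hSj
    rw [integral_add hSL2 hS0, integral_sub hSL1 hSj, integral_sub hS2 hSi,
      integral_const_mul, integral_const_mul, integral_const_mul, integral_const_mul]
    have e2 : (∫ y : Ed d, (p y * y i * y j) * S3.eK t x y) =
        S3.Gfn (fun z => p z * z i * z j) t x := rfl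
    have ei : (∫ y : Ed d, (p y * y i) * S3.eK t x y) =
        S3.Gfn (fun z => p z * z i) t x := rfl
    have ej : (∫ y : Ed d, (p y * y j) * S3.eK t x y) =
        S3.Gfn (fun z => p z * z j) t x := rfl
    have e0 : (∫ y : Ed d, p y * S3.eK t x y) = S3.Gfn p t x := rfl
    rw [e2, ei, ej, e0, hmi, hmj]
    exact S3.cov_algebra _ _ _ _ (hLpos x)
  -- derivative of the i-th component of V
  have hproj : HasFDerivAt (fun y : Ed d => y i)
      (innerSL ℝ (EuclideanSpace.single i (1:ℝ))) x := by
    have h := (innerSL ℝ (E := Ed d) (EuclideanSpace.single i (1:ℝ))).hasFDerivAt (x := x)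
    refine h.congr_of_eventuallyEq (Filter.Eventually.of_forall fun w => ?_)
    show w i = (inner ℝ (EuclideanSpace.single i (1:ℝ)) w : ℝ)
    simp [EuclideanSpace.inner_single_left]
  have hLx := S3.engine htIoo hp hp0 hpm hbd0 x
  have hinv : HasFDerivAt (fun y : Ed d => (S3.Gfn p t y)⁻¹)
      ((-(S3.Gfn p t x ^ 2)⁻¹) • innerSL ℝ ((t / (1 - t ^ 2)) • S3.Vm p t x)) x :=
    (hasDerivAt_inv (hLpos x).ne').comp_hasFDerivAt x hLx
  have hMi := S3.engine htIoo hp hp0 (hm1 i) (hbd1 i) x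
  have hprod := hinv.mul hMi
  have hsum := ((hproj.const_mul (-(2 * (t ^ 2 / (2 * (1 - t ^ 2)))))).add
      (hprod.const_mul (t / (1 - t ^ 2)))).const_mul (1 / t)
  have hval : ∀ u : Ed d, (innerSL ℝ u) (EuclideanSpace.single j (1:ℝ)) = u j := by
    intro u
    have h0 : (innerSL ℝ u) (EuclideanSpace.single j (1:ℝ)) =
        (inner ℝ u (EuclideanSpace.single j (1:ℝ)) : ℝ) := rfl
    rw [h0, EuclideanSpace.inner_single_right]
    simp
  have hjac : jacobianV p t x i j = 1 / t * (-(2 * (t ^ 2 / (2 * (1 - t ^ 2)))) *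
        (EuclideanSpace.single i (1:ℝ) : Ed d) j +
      t / (1 - t ^ 2) * ((S3.Gfn p t x)⁻¹ *
          (t / (1 - t ^ 2) * S3.Gfn (fun z => p z * z i * z j) t x) +
        S3.Gfn (fun z => p z * z i) t x * (-(S3.Gfn p t x ^ 2)⁻¹ *
          (t / (1 - t ^ 2) * S3.Gfn (fun z => p z * z j) t x)))) := by
    simp only [Pi.add_apply, Pi.mul_apply] at hsum
    rw [jacobianV, Matrix.of_apply, hfun i, hsum.fderiv]
    simp only [ContinuousLinearMap.add_apply, ContinuousLinearMap.smul_apply, smul_eq_mul,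
      hval, PiLp.smul_apply]
    rw [hVgi i j x, hVmi j x]
  -- final algebra
  rw [hjac, Matrix.sub_apply, Matrix.smul_apply, Matrix.smul_apply, Matrix.one_apply,
    smul_eq_mul, smul_eq_mul, hcov, EuclideanSpace.single_apply]
  by_cases hij : i = j
  · subst hij
    simp only [if_pos rfl]
    exact S3.final_algebra t _ _ _ _ 1 ht0 hs2 (hLpos x)
  · rw [if_neg (fun h => hij h.symm), if_neg hij]
    exact S3.final_algebra t _ _ _ _ 0 ht0 hs2 (hLpos x)
end
end
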